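/- arXiv:1302.6762 — 2 statements merged into one kernel-verified Lean document; each statement's English description precedes it below -/
import Mathlib

section
/- Let H, θ ∈ ℝ with θ ∉ {η₁, …, η_m}. Let B = diag(e^{β₁ H}, …, e^{β_{m+1} H}) and let J be the column vector J = e^{θH} (1, η₁/(η₁ − θ), …, η_m/(η_m − θ))ᵀ. Then the linear system A B w = J has a unique solution w = (w₁, …, w_{m+1})ᵀ, given by w_k = e^{θH} · [∏_{j=1}^m (1 − β_k/η_j) / ∏_{j=1, j≠k}^{m+1} (1 − β_k/β_j)] · [∏_{i=1, i≠k}^{m+1} (1 − θ/β_i) / ∏_{i=1}^m (1 − θ/η_i)] · e^{−β_k H} for k = 1, …, m+1. -/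
open Finset

open Polynomial in
private lemma lag_eval {n : ℕ} (v : Fin n → ℝ) (hv : Function.Injective v) (P : Polynomial ℝ)
    (hP : P.natDegree < n) (x : ℝ) :
    P.eval x = ∑ k, P.eval (v k) * ∏ i ∈ univ.erase k, ((v i - x) / (v i - v k)) := by
  have hdeg : P.degree < (#(univ : Finset (Fin n)) : ℕ) := by
    rw [card_univ, Fintype.card_fin]
    exact lt_of_le_of_lt degree_le_natDegree (by exact_mod_cast hP)
  conv_lhs => rw [Lagrange.eq_interpolate hv.injOn hdeg]
  rw [Lagrange.interpolate_apply, eval_finset_sum]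
  refine sum_congr rfl fun k _ => ?_
  rw [eval_mul, eval_C, Lagrange.basis, eval_prod]
  congr 1
  refine prod_congr rfl fun i _ => ?_
  rw [Lagrange.basisDivisor, eval_mul, eval_C, eval_sub, eval_X, eval_C,
    ← neg_div_neg_eq, neg_sub, neg_sub, div_eq_mul_inv, mul_comm]

open Polynomial in
private lemma A_unit {m : ℕ} (η : Fin m → ℝ) (hηinj : Function.Injective η) (hη0 : ∀ i, η i ≠ 0)
    (β : Fin (m + 1) → ℝ) (hβinj : Function.Injective β) (hηβ : ∀ i j, η i - β j ≠ 0) :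
    IsUnit (Matrix.of (Fin.cons (fun _ => (1 : ℝ)) (fun i j => η i / (η i - β j))) :
      Matrix (Fin (m + 1)) (Fin (m + 1)) ℝ) := by
  set A : Matrix (Fin (m + 1)) (Fin (m + 1)) ℝ :=
    Matrix.of (Fin.cons (fun _ => (1 : ℝ)) (fun i j => η i / (η i - β j))) with hAdef
  rw [← Matrix.vecMul_injective_iff_isUnit]
  have hker : ∀ v : Fin (m + 1) → ℝ, Matrix.vecMul v A = 0 → v = 0 := by
    intro v hv
    have hv' : ∀ j, v 0 + ∑ i : Fin m, v i.succ * (η i / (η i - β j)) = 0 := by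
      intro j
      have h := congrFun hv j
      simpa [hAdef, Matrix.vecMul, dotProduct, Fin.sum_univ_succ] using h
    set N : Polynomial ℝ := Polynomial.C (v 0) * ∏ i, (Polynomial.C (η i) - Polynomial.X) +
        ∑ i : Fin m, Polynomial.C (v i.succ * η i) *
          ∏ l ∈ univ.erase i, (Polynomial.C (η l) - Polynomial.X) with hNdef
    have hNeval : ∀ x : ℝ, N.eval x = v 0 * ∏ i, (η i - x) +
        ∑ i : Fin m, v i.succ * η i * ∏ l ∈ univ.erase i, (η l - x) := by
      intro x
      simp [hNdef, Polynomial.eval_prod, Polynomial.eval_finset_sum]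
    have hfac : ∀ a : ℝ, (Polynomial.C a - Polynomial.X).natDegree ≤ 1 :=
      fun a => le_trans (Polynomial.natDegree_sub_le _ _) (by simp)
    have hprodDeg : ∀ s : Finset (Fin m),
        (∏ l ∈ s, (Polynomial.C (η l) - Polynomial.X)).natDegree ≤ m := by
      intro s
      refine le_trans (Polynomial.natDegree_prod_le _ _)
        (le_trans (Finset.sum_le_card_nsmul s _ 1 fun l _ => hfac (η l)) ?_)
      calc #s • 1 = #s := by simp
        _ ≤ m := by simpa using card_le_card (subset_univ s)
    have hN0 : N = 0 := by
      refine Polynomial.eq_zero_of_degree_lt_of_eval_index_eq_zero (v := β) univ hβinj.injOn ?_ ?_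
      · have h1 : N.natDegree ≤ m := by
          refine le_trans (Polynomial.natDegree_add_le _ _) (max_le ?_ ?_)
          · refine le_trans Polynomial.natDegree_mul_le ?_
            simp only [Polynomial.natDegree_C, zero_add]
            simpa using hprodDeg univ
          · refine Polynomial.natDegree_sum_le_of_forall_le _ _ fun i _ => ?_
            refine le_trans Polynomial.natDegree_mul_le ?_
            simp only [Polynomial.natDegree_C, zero_add]
            exact hprodDeg (univ.erase i)
        calc N.degree ≤ (N.natDegree : WithBot ℕ) := Polynomial.degree_le_natDegree
          _ < ((m + 1 : ℕ) : WithBot ℕ) := by exact_mod_cast Nat.lt_succ_of_le h1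
          _ = ((#(univ : Finset (Fin (m + 1))) : ℕ) : WithBot ℕ) := by simp
      · intro j _
        have hprod : ∀ i : Fin m,
            (∏ t, (η t - β j)) * (η i / (η i - β j)) = η i * ∏ l ∈ univ.erase i, (η l - β j) := by
          intro i
          rw [← Finset.mul_prod_erase univ (fun t => η t - β j) (mem_univ i)]
          field_simp [hηβ i j]
        have heq : N.eval (β j) =
            (∏ t, (η t - β j)) * (v 0 + ∑ i : Fin m, v i.succ * (η i / (η i - β j))) := by
          rw [hNeval, mul_add, Finset.mul_sum]
          congr 1
          · ring
          refine sum_congr rfl fun i _ => ?_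
          rw [show (∏ t, (η t - β j)) * (v i.succ * (η i / (η i - β j)))
              = v i.succ * ((∏ t, (η t - β j)) * (η i / (η i - β j))) from by ring, hprod i]
          ring
        rw [heq, hv' j, mul_zero]
    have hsucc : ∀ r : Fin m, v r.succ = 0 := by
      intro r
      have h' := hNeval (η r)
      rw [hN0, Polynomial.eval_zero] at h'
      have h1 : (∏ i, (η i - η r)) = 0 := prod_eq_zero (mem_univ r) (sub_self (η r))
      have h3 : ∑ i : Fin m, v i.succ * η i * ∏ l ∈ univ.erase i, (η l - η r)
          = v r.succ * η r * ∏ l ∈ univ.erase r, (η l - η r) := by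
        refine Finset.sum_eq_single r (fun i _ hir => ?_) (fun h => absurd (mem_univ r) h)
        rw [prod_eq_zero (mem_erase.mpr ⟨Ne.symm hir, mem_univ r⟩) (sub_self (η r)), mul_zero]
      rw [h1, mul_zero, zero_add, h3] at h'
      have hne : (∏ l ∈ univ.erase r, (η l - η r)) ≠ 0 :=
        prod_ne_zero_iff.mpr fun l hl => sub_ne_zero.mpr fun e => (mem_erase.mp hl).1 (hηinj e)
      rcases mul_eq_zero.mp h'.symm with h'' | h''
      · rcases mul_eq_zero.mp h'' with h4 | h4
        · exact h4
        · exact absurd h4 (hη0 r)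
      · exact absurd h'' hne
    have h0 : v 0 = 0 := by
      have h := hv' 0
      simpa [hsucc] using h
    funext j
    induction j using Fin.cases with
    | zero => exact h0
    | succ i => exact hsucc i
  intro v1 v2 h12
  have h12' : Matrix.vecMul v1 A = Matrix.vecMul v2 A := h12
  have h := hker (v1 - v2) (by rw [Matrix.sub_vecMul, h12', sub_self])
  exact sub_eq_zero.mp h

/-- unique solution of the linear system `A B w = J`. -/
theorem stmt_16 (m : ℕ) (hm : 0 < m)
    (η : Fin m → ℝ) (hη : StrictMono η) (hηpos : ∀ i, 0 < η i)
    (β : Fin (m + 1) → ℝ) (hβinj : Function.Injective β) (hβpos : ∀ j, 0 < β j)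
    (hβη : ∀ i j, β j ≠ η i)
    (H θ : ℝ) (hθ : ∀ i, θ ≠ η i)
    (A : Matrix (Fin (m + 1)) (Fin (m + 1)) ℝ)
    (hA : A = Matrix.of (Fin.cons (fun _ => (1 : ℝ)) (fun i j => η i / (η i - β j))))
    (B : Matrix (Fin (m + 1)) (Fin (m + 1)) ℝ)
    (hB : B = Matrix.diagonal fun j => Real.exp (β j * H))
    (Jv : Fin (m + 1) → ℝ)
    (hJ : Jv = Fin.cons (Real.exp (θ * H)) fun i => Real.exp (θ * H) * (η i / (η i - θ))) :
    ∀ w : Fin (m + 1) → ℝ,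
      (A * B).mulVec w = Jv ↔
        w = fun k =>
          Real.exp (θ * H) *
            ((∏ j, (1 - β k / η j)) / ∏ j ∈ univ.erase k, (1 - β k / β j)) *
            ((∏ i ∈ univ.erase k, (1 - θ / β i)) / ∏ i, (1 - θ / η i)) *
            Real.exp (-(β k) * H) := by
  subst hA hB hJ
  intro w
  have hηθ : ∀ i, η i - θ ≠ 0 := fun i => sub_ne_zero.mpr fun h => hθ i h.symm
  have hηβ : ∀ i j, η i - β j ≠ 0 := fun i j => sub_ne_zero.mpr fun h => hβη i j h.symm
  have hη0 : ∀ i, η i ≠ 0 := fun i => (hηpos i).ne'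
  have hβ0 : ∀ j, β j ≠ 0 := fun j => (hβpos j).ne'
  have hββ : ∀ {j k : Fin (m + 1)}, j ≠ k → β j - β k ≠ 0 :=
    fun h => sub_ne_zero.mpr fun e => h (hβinj e)
  set T : ℝ := ∏ i, (η i - θ) with hT
  have hTne : T ≠ 0 := prod_ne_zero_iff.mpr fun i _ => hηθ i
  set L : Fin (m + 1) → ℝ := fun k => ∏ i ∈ univ.erase k, ((β i - θ) / (β i - β k)) with hLdef
  set D : Fin (m + 1) → ℝ := fun k =>
      ((∏ j, (1 - β k / η j)) / ∏ j ∈ univ.erase k, (1 - β k / β j)) *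
        ((∏ i ∈ univ.erase k, (1 - θ / β i)) / ∏ i, (1 - θ / η i)) with hDdef
  have hD : ∀ k, D k = (∏ j, (η j - β k)) * L k / T := by
    intro k
    have e1 : (∏ j, (1 - β k / η j)) = (∏ j, (η j - β k)) / ∏ j, η j := by
      rw [← prod_div_distrib]
      exact prod_congr rfl fun j _ => by rw [sub_div, div_self (hη0 j)]
    have e2 : (∏ j ∈ univ.erase k, (1 - β k / β j))
        = (∏ j ∈ univ.erase k, (β j - β k)) / ∏ j ∈ univ.erase k, β j := by
      rw [← prod_div_distrib]
      exact prod_congr rfl fun j hj => by rw [sub_div, div_self (hβ0 j)]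
    have e3 : (∏ i ∈ univ.erase k, (1 - θ / β i))
        = (∏ i ∈ univ.erase k, (β i - θ)) / ∏ i ∈ univ.erase k, β i := by
      rw [← prod_div_distrib]
      exact prod_congr rfl fun i hi => by rw [sub_div, div_self (hβ0 i)]
    have e4 : (∏ i, (1 - θ / η i)) = T / ∏ i, η i := by
      rw [hT, ← prod_div_distrib]
      exact prod_congr rfl fun i _ => by rw [sub_div, div_self (hη0 i)]
    have hLv : L k = (∏ i ∈ univ.erase k, (β i - θ)) / (∏ i ∈ univ.erase k, (β i - β k)) := by
      simp only [hLdef]; exact Finset.prod_div_distrib (s := univ.erase k) (f := fun i => β i - θ) (g := fun i => β i - β k)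
    have hE : (∏ j, η j) ≠ 0 := prod_ne_zero_iff.mpr fun j _ => hη0 j
    have hR : (∏ j ∈ univ.erase k, β j) ≠ 0 := prod_ne_zero_iff.mpr fun j _ => hβ0 j
    have hQ : (∏ j ∈ univ.erase k, (β j - β k)) ≠ 0 :=
      prod_ne_zero_iff.mpr fun j hj => hββ (mem_erase.mp hj).1
    simp only [hDdef]
    rw [e1, e2, e3, e4, hLv]
    field_simp
  have key : ∀ s : Finset (Fin m), ∑ k, (∏ j ∈ s, (η j - β k)) * L k = ∏ j ∈ s, (η j - θ) := by
    intro s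
    have hfac : ∀ a : ℝ, (Polynomial.C a - Polynomial.X).natDegree ≤ 1 :=
      fun a => le_trans (Polynomial.natDegree_sub_le _ _) (by simp)
    have hdeg : (∏ j ∈ s, (Polynomial.C (η j) - Polynomial.X)).natDegree < m + 1 := by
      refine Nat.lt_succ_of_le (le_trans (Polynomial.natDegree_prod_le _ _)
        (le_trans (Finset.sum_le_card_nsmul s _ 1 fun l _ => hfac (η l)) ?_))
      calc #s • 1 = #s := by simp
        _ ≤ m := by simpa using card_le_card (subset_univ s)
    have h := lag_eval β hβinj (∏ j ∈ s, (Polynomial.C (η j) - Polynomial.X)) hdeg θ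
    simp only [Polynomial.eval_prod, Polynomial.eval_sub, Polynomial.eval_C,
      Polynomial.eval_X] at h
    rw [hLdef]
    exact h.symm
  have hsum0 : ∑ k, D k = 1 := by
    calc ∑ k, D k = (∑ k, (∏ j, (η j - β k)) * L k) / T := by
          rw [Finset.sum_div]; exact sum_congr rfl fun k _ => hD k
      _ = T / T := by rw [key univ]
      _ = 1 := div_self hTne
  have hsumr : ∀ r : Fin m, ∑ k, (η r / (η r - β k)) * D k = η r / (η r - θ) := by
    intro r
    have step : ∀ k, (η r / (η r - β k)) * D k
        = η r * ((∏ j ∈ univ.erase r, (η j - β k)) * L k) / T := by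
      intro k
      rw [hD k, ← Finset.mul_prod_erase univ (fun j => η j - β k) (mem_univ r)]
      field_simp [hηβ r k]
    have hEr : (∏ j ∈ univ.erase r, (η j - θ)) ≠ 0 :=
      prod_ne_zero_iff.mpr fun j _ => hηθ j
    calc ∑ k, (η r / (η r - β k)) * D k
        = (∑ k, η r * ((∏ j ∈ univ.erase r, (η j - β k)) * L k)) / T := by
          rw [Finset.sum_div]; exact sum_congr rfl fun k _ => step k
      _ = η r * (∏ j ∈ univ.erase r, (η j - θ)) / T := by rw [← Finset.mul_sum, key (univ.erase r)]
      _ = η r / (η r - θ) := by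
          rw [hT, ← Finset.mul_prod_erase univ (fun i => η i - θ) (mem_univ r)]
          field_simp [hηθ r]
  set w₀ : Fin (m + 1) → ℝ := fun k =>
      Real.exp (θ * H) *
        ((∏ j, (1 - β k / η j)) / ∏ j ∈ univ.erase k, (1 - β k / β j)) *
        ((∏ i ∈ univ.erase k, (1 - θ / β i)) / ∏ i, (1 - θ / η i)) *
        Real.exp (-(β k) * H) with hw₀def
  have hw₀D : ∀ k, w₀ k = Real.exp (θ * H) * D k * Real.exp (-(β k) * H) := by
    intro k; simp only [hw₀def, hDdef]; ring
  have hABw₀ : (Matrix.of (Fin.cons (fun _ => (1 : ℝ)) (fun i j => η i / (η i - β j))) *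
      Matrix.diagonal (fun j => Real.exp (β j * H))).mulVec w₀
      = Fin.cons (Real.exp (θ * H)) fun i => Real.exp (θ * H) * (η i / (η i - θ)) := by
    rw [← Matrix.mulVec_mulVec]
    have hBv : (Matrix.diagonal fun j => Real.exp (β j * H)).mulVec w₀
        = fun j => Real.exp (θ * H) * D j := by
      funext j
      rw [Matrix.mulVec_diagonal, hw₀D j, neg_mul, Real.exp_neg]
      field_simp
    rw [hBv]
    funext r
    induction r using Fin.cases with
    | zero =>
        simp only [Matrix.mulVec, dotProduct, Matrix.of_apply, Fin.cons_zero, one_mul,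
          ← Finset.mul_sum, hsum0, mul_one]
    | succ i =>
        simp only [Matrix.mulVec, dotProduct, Matrix.of_apply, Fin.cons_succ]
        calc ∑ j, η i / (η i - β j) * (Real.exp (θ * H) * D j)
            = Real.exp (θ * H) * ∑ j, (η i / (η i - β j)) * D j := by
              rw [Finset.mul_sum]; exact sum_congr rfl fun j _ => by ring
          _ = Real.exp (θ * H) * (η i / (η i - θ)) := by rw [hsumr i]
  constructor
  · intro h
    have hAu : IsUnit (Matrix.of (Fin.cons (fun _ => (1 : ℝ)) (fun i j => η i / (η i - β j))) :
        Matrix (Fin (m + 1)) (Fin (m + 1)) ℝ) := A_unit η hη.injective hη0 β hβinj hηβ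
    have hBu : IsUnit (Matrix.diagonal fun j => Real.exp (β j * H) :
        Matrix (Fin (m + 1)) (Fin (m + 1)) ℝ) := by
      rw [Matrix.isUnit_iff_isUnit_det, Matrix.det_diagonal]
      exact isUnit_iff_ne_zero.mpr (prod_ne_zero_iff.mpr fun j _ => Real.exp_ne_zero _)
    have hinj := Matrix.mulVec_injective_iff_isUnit.mpr (hAu.mul hBu)
    exact hinj (h.trans hABw₀.symm)
  · rintro rfl
    exact hABw₀
end

section
/- Partition A as A = [[A₁₁, A₁₂], [A₂₁, A₂₂]], where A₁₁ = (1) is the top-left 1×1 block, A₁₂ = (1, …, 1) is 1×m, A₂₁ = (η₁/(η₁ − β₁), …, η_m/(η_m − β₁))ᵀ, and A₂₂ = (η_i/(η_i − β_{j+1}))_{1≤i,j≤m}. Then A₂₂ is invertible, the Schur complement satisfies A₁₁ − A₁₂ A₂₂⁻¹ A₂₁ = ∏_{i=1}^m (β_{i+1} − β₁) / ∏_{i=1}^m (η_i − β₁), and consequently det A = det(A₂₂) · ∏_{i=1}^m (β_{i+1} − β₁) / ∏_{i=1}^m (η_i − β₁) ≠ 0. -/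
open Finset Matrix

open Polynomial in

lemma cauchy_like_det_ne_zero (m : ℕ) (η γ : Fin m → ℝ)
    (hη : Function.Injective η) (hγ : Function.Injective γ)
    (hη0 : ∀ i, η i ≠ 0) (hγ0 : ∀ j, γ j ≠ 0)
    (hηγ : ∀ i j, η i ≠ γ j) :
    (Matrix.of fun i j => η i / (η i - γ j)).det ≠ 0 := by
  intro hdet
  obtain ⟨v, hv, hmul⟩ := (Matrix.exists_mulVec_eq_zero_iff).mpr hdet
  set P : ℝ[X] := X * ∑ j, C (v j) * ∏ k ∈ univ.erase j, (X - C (γ k)) with hP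
  have hsub : ∀ i j, η i - γ j ≠ 0 := fun i j => sub_ne_zero.mpr (hηγ i j)
  have hPdeg : P.natDegree ≤ m := by
    rcases Nat.eq_zero_or_pos m with hm | hm
    · subst hm
      simp [hP]
    have h1 : (∑ j, C (v j) * ∏ k ∈ univ.erase j, (X - C (γ k)) : ℝ[X]).natDegree ≤ m - 1 := by
      refine Polynomial.natDegree_sum_le_of_forall_le _ _ fun j _ => ?_
      refine le_trans (Polynomial.natDegree_C_mul_le _ _) ?_
      refine le_trans (Polynomial.natDegree_prod_le _ _) ?_
      simp [Polynomial.natDegree_X_sub_C, Finset.card_erase_of_mem]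
    calc P.natDegree ≤ (X : ℝ[X]).natDegree + _ := Polynomial.natDegree_mul_le
      _ ≤ 1 + (m - 1) := by rw [Polynomial.natDegree_X]; gcongr
      _ ≤ m := by omega
  have hPeval : ∀ i, P.eval (η i) = 0 ∧ P.eval 0 = 0 := by
    intro i
    constructor
    · have h0 : ∑ j, (η i / (η i - γ j)) * v j = 0 := by
        have := congrFun hmul i
        simpa [Matrix.mulVec, dotProduct] using this
      have key : ∀ j : Fin m, v j * ∏ k ∈ univ.erase j, (η i - γ k) =
          ((η i / (η i - γ j)) * v j) * (∏ k, (η i - γ k)) / η i := by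
        intro j
        rw [← Finset.mul_prod_erase univ _ (Finset.mem_univ j)]
        rw [eq_div_iff (hη0 i)]
        field_simp [hsub i j]
      have : P.eval (η i) = η i * ∑ j, v j * ∏ k ∈ univ.erase j, (η i - γ k) := by
        simp [hP, Polynomial.eval_finset_sum, Polynomial.eval_prod]
      rw [this]
      rw [Finset.sum_congr rfl fun j _ => key j]
      rw [← Finset.sum_div, ← Finset.sum_mul, h0]
      simp
    · simp [hP]
  have hcard : P = 0 := by
    refine Polynomial.eq_zero_of_natDegree_lt_card_of_eval_eq_zero' P
      (insert (0:ℝ) (univ.image η)) ?_ ?_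
    · intro x hx
      rcases Finset.mem_insert.mp hx with rfl | hx
      · rcases Nat.eq_zero_or_pos m with hm | hm
        · subst hm; simp [hP]
        · exact (hPeval ⟨0, hm⟩).2
      · obtain ⟨i, _, rfl⟩ := Finset.mem_image.mp hx
        exact (hPeval i).1
    · have h0 : (0:ℝ) ∉ univ.image η := by
        simp only [Finset.mem_image, Finset.mem_univ, true_and, not_exists]
        exact fun i h => hη0 i h
      rw [Finset.card_insert_of_notMem h0, Finset.card_image_of_injective _ hη,
        Finset.card_univ, Fintype.card_fin]
      omega
  obtain ⟨j, hj⟩ := Function.ne_iff.mp hv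
  apply hj
  have := congrArg (Polynomial.eval (γ j)) hcard
  rw [hP] at this
  simp only [Polynomial.eval_mul, Polynomial.eval_X, Polynomial.eval_finset_sum,
    Polynomial.eval_mul, Polynomial.eval_C, Polynomial.eval_prod, Polynomial.eval_sub,
    Polynomial.eval_X, Polynomial.eval_C, Polynomial.eval_zero] at this
  rw [Finset.sum_eq_single j] at this
  · have hprod : ∏ k ∈ univ.erase j, (γ j - γ k) ≠ 0 := by
      refine Finset.prod_ne_zero_iff.mpr fun k hk => ?_
      exact sub_ne_zero.mpr fun h => (Finset.mem_erase.mp hk).1 (hγ h).symm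
    rcases mul_eq_zero.mp this with h | h
    · exact absurd h (hγ0 j)
    · rcases mul_eq_zero.mp h with h | h
      · exact h
      · exact absurd h hprod
  · intro k _ hkj
    apply mul_eq_zero_of_right
    refine Finset.prod_eq_zero (Finset.mem_erase.mpr ⟨hkj.symm, Finset.mem_univ j⟩) ?_
    simp
  · simp

/-- invertibility of `A₂₂`, the value of the Schur complement of `A₂₂` in `A`,
and the resulting determinant formula for `A`. -/
theorem stmt_17 (m : ℕ) (hm : 0 < m)
    (η : Fin m → ℝ) (hη : StrictMono η) (hηpos : ∀ i, 0 < η i)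
    (β : Fin (m + 1) → ℝ) (hβinj : Function.Injective β) (hβpos : ∀ j, 0 < β j)
    (hβη : ∀ i j, β j ≠ η i)
    (A : Matrix (Fin (m + 1)) (Fin (m + 1)) ℝ)
    (hA : A = Matrix.of (Fin.cons (fun _ => (1 : ℝ)) (fun i j => η i / (η i - β j))))
    (A12 : Fin m → ℝ) (hA12 : A12 = fun _ => (1 : ℝ))
    (A21 : Fin m → ℝ) (hA21 : A21 = fun i => η i / (η i - β 0))
    (A22 : Matrix (Fin m) (Fin m) ℝ)
    (hA22 : A22 = Matrix.of fun i j => η i / (η i - β j.succ)) :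
    IsUnit A22.det ∧
    1 - A12 ⬝ᵥ (A22⁻¹.mulVec A21) =
      (∏ i : Fin m, (β i.succ - β 0)) / ∏ i, (η i - β 0) ∧
    A.det = A22.det * ((∏ i : Fin m, (β i.succ - β 0)) / ∏ i, (η i - β 0)) ∧
    A.det ≠ 0 := by
  have hηinj : Function.Injective η := hη.injective
  have hη0 : ∀ i, η i ≠ 0 := fun i => (hηpos i).ne'
  have hsub : ∀ i j, η i - β j ≠ 0 := fun i j => sub_ne_zero.mpr fun h => hβη i j h.symm
  have hdet22 : A22.det ≠ 0 := by
    rw [hA22]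
    exact cauchy_like_det_ne_zero m η (fun j => β j.succ) hηinj
      (fun a b hab => Fin.succ_injective m (hβinj hab))
      hη0 (fun j => (hβpos j.succ).ne') (fun i j h => hβη i j.succ h.symm)
  have hU : IsUnit A22.det := isUnit_iff_ne_zero.mpr hdet22
  have hprodη : (∏ i, (η i - β 0)) ≠ 0 := Finset.prod_ne_zero_iff.mpr fun i _ => hsub i 0
  have hprodβ : (∏ i : Fin m, (β i.succ - β 0)) ≠ 0 :=
    Finset.prod_ne_zero_iff.mpr fun i _ =>
      sub_ne_zero.mpr fun h => (Fin.succ_ne_zero i) (hβinj h)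
  have hdetA : A.det = A22.det * ((∏ i : Fin m, (β i.succ - β 0)) / ∏ i, (η i - β 0)) := by
    set B : Matrix (Fin (m+1)) (Fin (m+1)) ℝ := Matrix.of fun i j =>
      Fin.cases (A i 0) (fun j' => Fin.cases (0:ℝ)
        (fun i' => η i' * (β j'.succ - β 0) / ((η i' - β j'.succ) * (η i' - β 0))) i) j with hB
    have h1 : A.det = B.det := by
      rw [← Matrix.det_transpose A, ← Matrix.det_transpose B]
      refine Matrix.det_eq_of_forall_row_eq_smul_add_const
        (fun j => if j = 0 then 0 else 1) 0 (if_pos rfl) ?_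
      intro j i
      show A i j = B i j + (if j = 0 then (0:ℝ) else 1) * B i 0
      induction j using Fin.cases with
      | zero => simp [hB]
      | succ j' =>
        rw [if_neg (Fin.succ_ne_zero j')]
        induction i using Fin.cases with
        | zero => simp [hA, hB]
        | succ i' =>
          simp only [hA, hB, Matrix.of_apply, Fin.cases_succ, Fin.cases_zero, Fin.cons_succ, one_mul]
          field_simp [hsub i' j'.succ, hsub i' 0]
          ring
    have h2 : B.det = ((Matrix.of fun i' j' => η i' * (β j'.succ - β 0) /
        ((η i' - β j'.succ) * (η i' - β 0))) : Matrix (Fin m) (Fin m) ℝ).det := by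
      rw [Matrix.det_succ_row_zero]
      rw [Finset.sum_eq_single 0]
      · have hB00 : B 0 0 = 1 := by simp [hB, hA]
        rw [hB00, Fin.succAbove_zero]
        simp only [Fin.val_zero, pow_zero, one_mul, mul_one]
        congr 1
      · intro j _ hj
        obtain ⟨j', rfl⟩ := Fin.exists_succ_eq.mpr hj
        have : B 0 j'.succ = 0 := by simp [hB]
        simp [this]
      · simp
    have h3 : ((Matrix.of fun i' j' => η i' * (β j'.succ - β 0) /
        ((η i' - β j'.succ) * (η i' - β 0))) : Matrix (Fin m) (Fin m) ℝ)
        = Matrix.diagonal (fun i => (η i - β 0)⁻¹) * A22 *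
          Matrix.diagonal (fun j => β j.succ - β 0) := by
      ext i j
      simp only [Matrix.mul_diagonal, Matrix.diagonal_mul, Matrix.of_apply, hA22]
      field_simp
    rw [h1, h2, h3, Matrix.det_mul, Matrix.det_mul, Matrix.det_diagonal, Matrix.det_diagonal]
    rw [Finset.prod_inv_distrib, div_eq_mul_inv]
    ring
  have := A22.invertibleOfIsUnitDet hU
  let eqv : Fin (m+1) ≃ Unit ⊕ Fin m :=
    { toFun := Fin.cases (Sum.inl ()) Sum.inr
      invFun := Sum.elim (fun _ => 0) Fin.succ
      left_inv := fun i => by induction i using Fin.cases <;> simp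
      right_inv := fun x => by rcases x with ⟨⟩ | j <;> simp }
  have hsubm : A = (Matrix.fromBlocks (Matrix.of fun _ _ : Unit => (1:ℝ))
      (Matrix.of fun _ j => A12 j) (Matrix.of fun i _ => A21 i) A22).submatrix eqv eqv := by
    ext i j
    induction i using Fin.cases with
    | zero =>
      induction j using Fin.cases with
      | zero => simp [hA, eqv]
      | succ j' => simp [hA, hA12, eqv]
    | succ i' =>
      induction j using Fin.cases with
      | zero => simp [hA, hA21, eqv]
      | succ j' => simp [hA, hA22, eqv]
  have hschur : A.det = A22.det * (1 - A12 ⬝ᵥ A22⁻¹.mulVec A21) := by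
    rw [hsubm, Matrix.det_submatrix_equiv_self, Matrix.det_fromBlocks₂₂]
    congr 1
    rw [Matrix.det_unique, Matrix.invOf_eq_nonsing_inv]
    simp only [Matrix.sub_apply, Matrix.of_apply, Matrix.mul_apply, dotProduct,
      Matrix.mulVec, Finset.univ_unique, Finset.sum_singleton]
    congr 1
    simp only [Finset.sum_mul, Finset.mul_sum]
    rw [Finset.sum_comm]
    simp [mul_assoc]
  have hscalar : 1 - A12 ⬝ᵥ (A22⁻¹.mulVec A21) =
      (∏ i : Fin m, (β i.succ - β 0)) / ∏ i, (η i - β 0) :=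
    mul_left_cancel₀ hdet22 (hschur.symm.trans hdetA)
  exact ⟨hU, hscalar, hdetA,
    hdetA ▸ mul_ne_zero hdet22 (div_ne_zero hprodβ hprodη)⟩
end
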